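/- Let k ≥ 1, n > 5k + 13, and let c be an edge-coloring of K_n^3 containing no rainbow copy of F_{k+1}. Then there exist 2k+6 pairwise vertex-disjoint pairs {u_1,v_1}, …, {u_{2k+6}, v_{2k+6}} of vertices such that z_c(u_i, v_i) ≤ 3k for each i. -/
import Mathlib


open Finset

/-- The number of distinct colors appearing on triples of `K_n^3` containing both
`u` and `v`. -/
def zc {n : ℕ} (c : Finset (Fin n) → ℕ) (u v : Fin n) : ℕ :=
  ((univ.filter fun w : Fin n => w ≠ u ∧ w ≠ v).image fun w => c {u, v, w}).card

/-- The coloring `c` of `K_n^3` contains a rainbow copy of the `m`-star `F_m`. -/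
def HasRainbowStar (n m : ℕ) (c : Finset (Fin n) → ℕ) : Prop :=
  ∃ (v : Fin n) (P : Finset (Finset (Fin n))),
    P.card = m ∧ (∀ p ∈ P, p.card = 2 ∧ v ∉ p) ∧
    (∀ p ∈ P, ∀ q ∈ P, p ≠ q → Disjoint p q) ∧
    Set.InjOn (fun p : Finset (Fin n) => c (insert v p)) (↑P : Set (Finset (Fin n)))

lemma zc_symm {n : ℕ} (c : Finset (Fin n) → ℕ) (u v : Fin n) : zc c u v = zc c v u := by
  unfold zc
  congr 1
  have h1 : (univ.filter fun w : Fin n => w ≠ u ∧ w ≠ v) =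
      (univ.filter fun w : Fin n => w ≠ v ∧ w ≠ u) := by
    ext w; simp [and_comm]
  rw [h1]
  apply image_congr
  intro w _
  simp only
  rw [Finset.insert_comm]

lemma exists_fresh {α β : Type*} [DecidableEq α] [DecidableEq β] (A F : Finset α) (Cs : Finset β)
    (f : α → β) (h : Cs.card + F.card < (A.image f).card) :
    ∃ w ∈ A, w ∉ F ∧ f w ∉ Cs := by
  have hA : A = (A \ F) ∪ (A ∩ F) := (sdiff_union_inter A F).symm
  have h1 : (A.image f).card ≤ ((A \ F).image f).card + F.card := by
    calc (A.image f).card = (((A \ F).image f) ∪ ((A ∩ F).image f)).card := by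
          rw [← image_union, ← hA]
      _ ≤ ((A \ F).image f).card + ((A ∩ F).image f).card := card_union_le _ _
      _ ≤ ((A \ F).image f).card + F.card := by
          gcongr
          exact le_trans (card_image_le) (card_le_card (inter_subset_right))
  have h2 : Cs.card < ((A \ F).image f).card := by omega
  by_contra hco
  push_neg at hco
  have hsub : (A \ F).image f ⊆ Cs := by
    intro b hb
    obtain ⟨w, hw, rfl⟩ := mem_image.mp hb
    have := mem_sdiff.mp hw
    exact hco w this.1 this.2
  exact absurd (card_le_card hsub) (not_le.mpr h2)

lemma bad_partners_le (n k : ℕ) (c : Finset (Fin n) → ℕ)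
    (hc : ¬ HasRainbowStar n (k + 1) c) (v : Fin n) :
    (univ.filter fun u : Fin n => u ≠ v ∧ 3 * k + 1 ≤ zc c u v).card ≤ k := by
  by_contra hbig
  push_neg at hbig
  obtain ⟨T, hTsub, hTcard⟩ := Finset.exists_subset_card_eq hbig
  have hT : ∀ u ∈ T, u ≠ v ∧ 3 * k + 1 ≤ zc c u v := by
    intro u hu
    exact (mem_filter.mp (hTsub hu)).2
  -- greedy construction
  have key : ∀ m : ℕ, m ≤ k + 1 → ∃ P : Finset (Finset (Fin n)),
      P.card = m ∧ (∀ p ∈ P, p.card = 2 ∧ v ∉ p) ∧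
      (∀ p ∈ P, ∀ q ∈ P, p ≠ q → Disjoint p q) ∧
      Set.InjOn (fun p : Finset (Fin n) => c (insert v p)) (↑P : Set (Finset (Fin n))) ∧
      (∀ p ∈ P, (p ∩ T).card = 1) := by
    intro m
    induction m with
    | zero => intro _; exact ⟨∅, by simp, by simp, by simp, by simp, by simp⟩
    | succ m ih =>
      intro hm
      obtain ⟨P, hPcard, hP2, hPdisj, hPinj, hPT⟩ := ih (by omega)
      set V : Finset (Fin n) := P.biUnion (fun p => p) with hV
      have hVcard : V.card = 2 * m := by
        rw [hV, card_biUnion (fun p hp q hq hpq => hPdisj p hp q hq hpq)]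
        rw [Finset.sum_congr rfl (fun p hp => (hP2 p hp).1)]
        simp [hPcard, mul_comm]
      have hVT : (V ∩ T).card = m := by
        have heq : V ∩ T = P.biUnion (fun p => p ∩ T) := by
          rw [hV]; ext x; simp [mem_biUnion]; tauto
        rw [heq, card_biUnion (fun p hp q hq hpq =>
          (hPdisj p hp q hq hpq).mono inter_subset_left inter_subset_left)]
        calc ∑ p ∈ P, (p ∩ T).card = ∑ p ∈ P, 1 := Finset.sum_congr rfl (fun p hp => hPT p hp)
          _ = m := by simp [hPcard]
      -- pick u ∈ T \ V
      have hTV : (T \ V).Nonempty := by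
        rw [← card_pos]
        have := card_sdiff_add_card_inter T V
        have h3 : (T ∩ V).card = m := by rwa [inter_comm] at hVT
        omega
      obtain ⟨u, hu⟩ := hTV
      have huT : u ∈ T := (mem_sdiff.mp hu).1
      have huV : u ∉ V := (mem_sdiff.mp hu).2
      obtain ⟨huv, hzc⟩ := hT u huT
      -- forbidden set and used colors
      set F : Finset (Fin n) := (V ∪ T).erase u with hF
      set Cs : Finset ℕ := P.image (fun p => c (insert v p)) with hCs
      have hFcard : F.card ≤ m + k := by
        have h4 : (V ∪ T).card = V.card + T.card - (V ∩ T).card := by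
          have := card_union_add_card_inter V T
          omega
        have h5 : (V ∪ T).card = m + k + 1 := by
          rw [h4, hVcard, hTcard, hVT]
          omega
        have h6 : F.card = (V ∪ T).card - 1 := by
          rw [hF, card_erase_of_mem (mem_union_right _ huT)]
        omega
      have hCscard : Cs.card ≤ m := le_trans card_image_le (le_of_eq hPcard)
      -- find fresh w
      have hfresh : ∃ w ∈ (univ.filter fun w : Fin n => w ≠ u ∧ w ≠ v), w ∉ F ∧
          (fun w => c {u, v, w}) w ∉ Cs := by
        apply exists_fresh
        show Cs.card + F.card < zc c u v
        omega
      obtain ⟨w, hwmem, hwF, hwC⟩ := hfresh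
      obtain ⟨hwu, hwv⟩ := (mem_filter.mp hwmem).2
      have hwVT : w ∉ V ∪ T := by
        intro hmem
        exact hwF (mem_erase.mpr ⟨hwu, hmem⟩)
      have hwVn : w ∉ V := fun h => hwVT (mem_union_left _ h)
      have hwTn : w ∉ T := fun h => hwVT (mem_union_right _ h)
      -- new pair
      set p' : Finset (Fin n) := {u, w} with hp'
      have hp'card : p'.card = 2 := card_pair (Ne.symm hwu)
      have hp'V : ∀ x ∈ p', x ∉ V := by
        intro x hx
        rcases mem_insert.mp hx with rfl | hx
        · exact huV
        · rw [mem_singleton.mp hx]; exact hwVn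
      have hsubV : ∀ q ∈ P, q ⊆ V := fun q hq => subset_biUnion_of_mem (fun p => p) hq
      have hp'new : p' ∉ P := by
        intro hmem
        exact (hp'V u (mem_insert_self _ _)) (hsubV p' hmem (mem_insert_self _ _))
      have hcolor : c (insert v p') = c {u, v, w} := by
        rw [hp']
        congr 1
        rw [Finset.insert_comm]
      refine ⟨insert p' P, ?_, ?_, ?_, ?_, ?_⟩
      · rw [card_insert_of_notMem hp'new, hPcard]
      · intro p hp
        rcases mem_insert.mp hp with rfl | hp
        · refine ⟨hp'card, ?_⟩
          intro hmem
          rcases mem_insert.mp hmem with rfl | hmem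
          · exact huv rfl
          · exact hwv (mem_singleton.mp hmem).symm
        · exact hP2 p hp
      · intro p hp q hq hpq
        rcases mem_insert.mp hp with rfl | hp <;> rcases mem_insert.mp hq with rfl | hq
        · exact absurd rfl hpq
        · rw [disjoint_left]
          intro a ha haq
          exact hp'V a ha (hsubV q hq haq)
        · rw [disjoint_right]
          intro a ha haq
          exact hp'V a ha (hsubV p hp haq)
        · exact hPdisj p hp q hq hpq
      · rw [coe_insert]
        intro a ha b hb hab
        simp only [Set.mem_insert_iff, mem_coe] at ha hb
        simp only at hab
        rcases ha with rfl | ha <;> rcases hb with rfl | hb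
        · rfl
        · exfalso
          apply hwC
          have hbC : c (insert v b) ∈ Cs := mem_image_of_mem _ hb
          rw [← hab, hcolor] at hbC
          exact hbC
        · exfalso
          apply hwC
          have haC : c (insert v a) ∈ Cs := mem_image_of_mem _ ha
          rw [hab, hcolor] at haC
          exact haC
        · exact hPinj ha hb hab
      · intro p hp
        rcases mem_insert.mp hp with rfl | hp
        · have : p' ∩ T = {u} := by
            ext x
            simp only [mem_inter, mem_singleton, hp', mem_insert]
            constructor
            · rintro ⟨h1 | h1, h2⟩
              · exact h1
              · exact absurd (h1 ▸ h2) hwTn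
            · rintro rfl; exact ⟨Or.inl rfl, huT⟩
          rw [this, card_singleton]
        · exact hPT p hp
  obtain ⟨P, h1, h2, h3, h4, _⟩ := key (k + 1) le_rfl
  exact hc ⟨v, P, h1, h2, h3, h4⟩

/-- if `n > 5k + 13` and an edge-coloring of `K_n^3` has no rainbow
`F_{k+1}`, then there exist `2k + 6` pairwise vertex-disjoint good pairs, i.e. pairs
`{u, v}` with `z_c(u, v) ≤ 3k`. -/
theorem stmt_8 (n k : ℕ) (hk : 1 ≤ k) (hn : 5 * k + 13 < n)
    (c : Finset (Fin n) → ℕ) (hc : ¬ HasRainbowStar n (k + 1) c) :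
    ∃ P : Finset (Finset (Fin n)),
      P.card = 2 * k + 6 ∧ (∀ p ∈ P, p.card = 2) ∧
      (∀ p ∈ P, ∀ q ∈ P, p ≠ q → Disjoint p q) ∧
      (∀ p ∈ P, ∀ u ∈ p, ∀ v ∈ p, u ≠ v → zc c u v ≤ 3 * k) := by
  have key : ∀ m : ℕ, m ≤ 2 * k + 6 → ∃ P : Finset (Finset (Fin n)),
      P.card = m ∧ (∀ p ∈ P, p.card = 2) ∧
      (∀ p ∈ P, ∀ q ∈ P, p ≠ q → Disjoint p q) ∧
      (∀ p ∈ P, ∀ u ∈ p, ∀ v ∈ p, u ≠ v → zc c u v ≤ 3 * k) := by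
    intro m
    induction m with
    | zero => intro _; exact ⟨∅, by simp, by simp, by simp, by simp⟩
    | succ m ih =>
      intro hm
      obtain ⟨P, hPcard, hP2, hPdisj, hPgood⟩ := ih (by omega)
      set V : Finset (Fin n) := P.biUnion (fun p => p) with hV
      have hVcard : V.card = 2 * m := by
        rw [hV, card_biUnion (fun p hp q hq hpq => hPdisj p hp q hq hpq)]
        calc ∑ p ∈ P, p.card = ∑ p ∈ P, 2 := Finset.sum_congr rfl (fun p hp => hP2 p hp)
          _ = 2 * m := by simp [hPcard, mul_comm]
      -- pick u outside V
      have hex : ∀ (S : Finset (Fin n)), S.card < n → ∃ x : Fin n, x ∉ S := by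
        intro S hS
        by_contra hco
        push_neg at hco
        have : (univ : Finset (Fin n)) ⊆ S := fun x _ => hco x
        have := card_le_card this
        simp [card_univ] at this
        omega
      obtain ⟨u, hu⟩ := hex V (by omega)
      -- bad partners of u
      set B : Finset (Fin n) := univ.filter fun w : Fin n => w ≠ u ∧ 3 * k + 1 ≤ zc c w u with hB
      have hBcard : B.card ≤ k := bad_partners_le n k c hc u
      obtain ⟨w, hw⟩ := hex (insert u (V ∪ B)) (by
        have h1 : (insert u (V ∪ B)).card ≤ 1 + (V.card + B.card) := by
          calc (insert u (V ∪ B)).card ≤ (V ∪ B).card + 1 := card_insert_le _ _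
            _ ≤ V.card + B.card + 1 := by
                have := card_union_le V B
                omega
            _ = 1 + (V.card + B.card) := by ring
        omega)
      have hwu : w ≠ u := fun h => hw (h ▸ mem_insert_self _ _)
      have hwV : w ∉ V := fun h => hw (mem_insert_of_mem (mem_union_left _ h))
      have hwB : w ∉ B := fun h => hw (mem_insert_of_mem (mem_union_right _ h))
      have hwgood : zc c w u ≤ 3 * k := by
        by_contra hco
        exact hwB (mem_filter.mpr ⟨mem_univ _, hwu, by omega⟩)
      have huV : u ∉ V := hu
      set p' : Finset (Fin n) := {u, w} with hp'
      have hp'card : p'.card = 2 := card_pair (Ne.symm hwu)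
      have hp'V : ∀ x ∈ p', x ∉ V := by
        intro x hx
        rcases mem_insert.mp hx with rfl | hx
        · exact huV
        · rw [mem_singleton.mp hx]; exact hwV
      have hsubV : ∀ q ∈ P, q ⊆ V := fun q hq => subset_biUnion_of_mem (fun p => p) hq
      have hp'new : p' ∉ P := by
        intro hmem
        exact (hp'V u (mem_insert_self _ _)) (hsubV p' hmem (mem_insert_self _ _))
      refine ⟨insert p' P, ?_, ?_, ?_, ?_⟩
      · rw [card_insert_of_notMem hp'new, hPcard]
      · intro p hp
        rcases mem_insert.mp hp with rfl | hp
        · exact hp'card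
        · exact hP2 p hp
      · intro p hp q hq hpq
        rcases mem_insert.mp hp with rfl | hp <;> rcases mem_insert.mp hq with rfl | hq
        · exact absurd rfl hpq
        · rw [disjoint_left]
          intro a ha haq
          exact hp'V a ha (hsubV q hq haq)
        · rw [disjoint_right]
          intro a ha haq
          exact hp'V a ha (hsubV p hp haq)
        · exact hPdisj p hp q hq hpq
      · intro p hp a ha b hb hab
        rcases mem_insert.mp hp with rfl | hp
        · have hmem : ∀ x ∈ p', x = u ∨ x = w := by
            intro x hx
            rcases mem_insert.mp hx with rfl | hx
            · exact Or.inl rfl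
            · exact Or.inr (mem_singleton.mp hx)
          rcases hmem a ha with rfl | rfl <;> rcases hmem b hb with rfl | rfl
          · exact absurd rfl hab
          · rw [zc_symm]; exact hwgood
          · exact hwgood
          · exact absurd rfl hab
        · exact hPgood p hp a ha b hb hab
  exact key (2 * k + 6) le_rfl
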